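/- Let (D,≤) be a directed set and let (T_i)_{i∈D} be a family of nonempty subsets of S such that T_j ⊆ T_i whenever i ≤ j, 0 lies in the closure of each T_i in ℝ, and for each i ∈ D and each x ∈ T_i there exists j ∈ D with x + T_j ⊆ T_i. Then Q = ⋂_{i∈D} cl(T_i) is a nonempty compact subset of βS_d that is closed under the semigroup operation: p+q ∈ Q for all p, q ∈ Q. -/
import Mathlib


open Set Filter

attribute [local instance] Ultrafilter.add

/-- `S` is a subsemigroup of `((0,∞),+)` which is dense in `(0,∞)`
    (with the usual topology of `ℝ`). -/
def DenseSubsemigroupPos (S : Set ℝ) : Prop :=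
  (∀ x ∈ S, 0 < x) ∧ (∀ x ∈ S, ∀ y ∈ S, x + y ∈ S) ∧ Ioi (0 : ℝ) ⊆ closure S

/-- `0⁺(S)`: the ultrafilters (on `S`, viewed as ultrafilters on `ℝ` containing `S`)
    all of whose members meet every interval `(0,ε)`. -/
def zeroPlus (S : Set ℝ) : Set (Ultrafilter ℝ) :=
  {p | ∀ ε > (0 : ℝ), Ioo (0 : ℝ) ε ∩ S ∈ p}

/-- `L` is a left ideal of the subsemigroup `T` of `βS_d`. -/
def IsLeftIdealIn (T L : Set (Ultrafilter ℝ)) : Prop :=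
  L.Nonempty ∧ L ⊆ T ∧ ∀ p ∈ T, ∀ q ∈ L, p + q ∈ L

/-- `L` is a minimal left ideal of the subsemigroup `T` of `βS_d`. -/
def IsMinimalLeftIdealIn (T L : Set (Ultrafilter ℝ)) : Prop :=
  IsLeftIdealIn T L ∧ ∀ L', IsLeftIdealIn T L' → L' ⊆ L → L' = L

/-- `K(T)`: the smallest two sided ideal of `T`, i.e. the union of all
    minimal left ideals of `T`. -/
def smallestIdeal (T : Set (Ultrafilter ℝ)) : Set (Ultrafilter ℝ) :=
  ⋃₀ {L | IsMinimalLeftIdealIn T L}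

/-- `A` is thick near zero (as a subset of `S`). -/
def ThickNearZero (S A : Set ℝ) : Prop :=
  ∃ ε > (0 : ℝ), ∀ F : Finset ℝ, F.Nonempty → ↑F ⊆ Ioo (0 : ℝ) ε ∩ S →
    ∀ δ > (0 : ℝ), ∃ y ∈ Ioo (0 : ℝ) δ ∩ S, ∀ x ∈ F, x + y ∈ A

/-- `A` is syndetic near zero (as a subset of `S`). -/
def SyndeticNearZero (S A : Set ℝ) : Prop :=
  ∀ ε > (0 : ℝ), ∃ F : Finset ℝ, F.Nonempty ∧ ↑F ⊆ Ioo (0 : ℝ) ε ∩ S ∧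
    ∃ δ > (0 : ℝ), ∀ x ∈ Ioo (0 : ℝ) δ ∩ S, ∃ t ∈ F, t + x ∈ A

/-- `A` is piecewise syndetic near zero (as a subset of `S`). -/
def PiecewiseSyndeticNearZero (S A : Set ℝ) : Prop :=
  ∀ δ > (0 : ℝ), ∃ F : Finset ℝ, F.Nonempty ∧ ↑F ⊆ Ioo (0 : ℝ) δ ∩ S ∧
    ThickNearZero S {y | y ∈ S ∧ ∃ t ∈ F, t + y ∈ A}

/-- `T_0`: sequences in `S` with infimum `0`. -/
def T0 (S : Set ℝ) : Set (ℕ → ℝ) :=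
  {f | (∀ n, f n ∈ S) ∧ IsGLB (range f) 0}

/-- `A` is a `J`-set near zero (as a subset of `S`). -/
def JSetNearZero (S A : Set ℝ) : Prop :=
  ∀ F : Finset (ℕ → ℝ), F.Nonempty → ↑F ⊆ T0 S → ∀ δ > (0 : ℝ),
    ∃ a ∈ S ∩ Ioo (0 : ℝ) δ, ∃ H : Finset ℕ, H.Nonempty ∧
      ∀ f ∈ F, a + ∑ t ∈ H, f t ∈ A

/-- `J_0(S)`: the members of `0⁺(S)` all of whose members are `J`-sets near zero. -/
def J0 (S : Set ℝ) : Set (Ultrafilter ℝ) :=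
  {p | p ∈ zeroPlus S ∧ ∀ A : Set ℝ, A ⊆ S → A ∈ p → JSetNearZero S A}

/-- `A` is central near zero: it belongs to some idempotent in `K(0⁺(S))`. -/
def CentralNearZero (S A : Set ℝ) : Prop :=
  ∃ p : Ultrafilter ℝ, p + p = p ∧ p ∈ smallestIdeal (zeroPlus S) ∧ A ∈ p

/-- `A` is a `C`-set near zero (it satisfies the conclusion of the Central Sets
    Theorem near zero). -/
def CSetNearZero (S A : Set ℝ) : Prop :=
  ∀ δ ∈ Ioo (0 : ℝ) 1,
    ∃ (α : Finset (ℕ → ℝ) → ℝ) (H : Finset (ℕ → ℝ) → Finset ℕ),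
      (∀ F : Finset (ℕ → ℝ), F.Nonempty → ↑F ⊆ T0 S →
        α F ∈ S ∧ α F < δ ∧ (H F).Nonempty) ∧
      (∀ F G : Finset (ℕ → ℝ), F.Nonempty → ↑F ⊆ T0 S → G.Nonempty → ↑G ⊆ T0 S →
        F ⊂ G → ∀ i ∈ H F, ∀ j ∈ H G, i < j) ∧
      (∀ m : ℕ, ∀ G : Fin (m + 1) → Finset (ℕ → ℝ), ∀ f : Fin (m + 1) → ℕ → ℝ,
        (∀ i, (G i).Nonempty) → (∀ i, ↑(G i) ⊆ T0 S) →
        (∀ i j, i < j → G i ⊂ G j) → (∀ i, f i ∈ G i) →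
        ∑ i, (α (G i) + ∑ t ∈ H (G i), f i t) ∈ A)

/-- `Q = ⋂ᵢ cl(Tᵢ)` is a nonempty compact subsemigroup of `βS_d`. -/
theorem inter_closure_is_compact_subsemigroup (S : Set ℝ)
    (hS : DenseSubsemigroupPos S) (D : Type*) [Preorder D] [Nonempty D]
    (hdir : ∀ i j : D, ∃ k, i ≤ k ∧ j ≤ k) (T : D → Set ℝ)
    (hTS : ∀ i, T i ⊆ S) (hTne : ∀ i, (T i).Nonempty)
    (hTanti : ∀ i j : D, i ≤ j → T j ⊆ T i)
    (hT0 : ∀ i, (0 : ℝ) ∈ closure (T i))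
    (hTadd : ∀ i, ∀ x ∈ T i, ∃ j, ∀ y ∈ T j, x + y ∈ T i) :
    (⋂ i, {p : Ultrafilter ℝ | T i ∈ p}).Nonempty ∧
    IsCompact (⋂ i, {p : Ultrafilter ℝ | T i ∈ p}) ∧
    (∀ p ∈ ⋂ i, {p : Ultrafilter ℝ | T i ∈ p}, S ∈ p) ∧
    ∀ p ∈ ⋂ i, {p : Ultrafilter ℝ | T i ∈ p},
      ∀ q ∈ ⋂ i, {p : Ultrafilter ℝ | T i ∈ p},
        p + q ∈ ⋂ i, {p : Ultrafilter ℝ | T i ∈ p} := by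
  have hQclosed : IsClosed (⋂ i, {p : Ultrafilter ℝ | T i ∈ p}) :=
    isClosed_iInter fun i => ultrafilter_isClosed_basic (T i)
  have hdir' : Directed (· ≥ ·) fun i => Filter.principal (T i) := by
    intro i j
    obtain ⟨k, hik, hjk⟩ := hdir i j
    exact ⟨k, Filter.principal_mono.2 (hTanti i k hik),
      Filter.principal_mono.2 (hTanti j k hjk)⟩
  have hne : ∀ i, (Filter.principal (T i)).NeBot := fun i =>
    Filter.principal_neBot_iff.2 (hTne i)
  have hF : (⨅ i, Filter.principal (T i)).NeBot :=
    Filter.iInf_neBot_of_directed' hdir' hne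
  refine ⟨⟨Ultrafilter.of (⨅ i, Filter.principal (T i)), ?_⟩, hQclosed.isCompact, ?_, ?_⟩
  · refine Set.mem_iInter.2 fun i => ?_
    exact Ultrafilter.of_le _ (iInf_le (fun i => Filter.principal (T i)) i
      (Filter.mem_principal_self (T i)))
  · intro p hp
    obtain ⟨i⟩ := ‹Nonempty D›
    exact Filter.mem_of_superset (Set.mem_iInter.1 hp i) (hTS i)
  · intro p hp q hq
    refine Set.mem_iInter.2 fun i => ?_
    have : ∀ᶠ x in (p : Filter ℝ), ∀ᶠ y in (q : Filter ℝ), x + y ∈ T i := by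
      refine Filter.mem_of_superset (Set.mem_iInter.1 hp i) ?_
      intro x hx
      obtain ⟨j, hj⟩ := hTadd i x hx
      exact Filter.mem_of_superset (Set.mem_iInter.1 hq j) (fun y hy => hj y hy)
    exact (Ultrafilter.eventually_add p q (· ∈ T i)).2 this
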